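/- Let X be an ordered Banach space that is also a vector lattice with respect to the same order, and assume the cone X_+ is normal. Then the formula |||x||| := sup{‖w‖ : 0 ≤ w ≤ |x|} defines a norm on X that is equivalent to the original norm and makes X a Banach lattice (i.e., |x| ≤ |y| implies |||x||| ≤ |||y|||). -/

import Mathlib

section Aux

variable {X : Type*} [NormedAddCommGroup X] [NormedSpace ℝ X]
    [Lattice X] [CovariantClass X X (· + ·) (· ≤ ·)]

lemma aux_abs_eq_zero {x : X} (h : |x| = 0) : x = 0 := by
  have h1 : x ≤ 0 := h ▸ le_abs_self x
  have h2 : -x ≤ 0 := h ▸ neg_le_abs x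
  exact le_antisymm h1 (neg_nonpos.mp h2)

lemma aux_sum_nonneg {f : ℕ → X} (hf : ∀ i, 0 ≤ f i) (m : ℕ) :
    0 ≤ ∑ i ∈ Finset.range m, f i := by
  induction m with
  | zero => simp
  | succ k ih => rw [Finset.sum_range_succ]; exact add_nonneg ih (hf k)

lemma aux_smul_le (hsmul : ∀ (a : ℝ) (x : X), 0 ≤ a → 0 ≤ x → 0 ≤ a • x)
    {a : ℝ} (ha : 0 ≤ a) {x y : X} (h : x ≤ y) : a • x ≤ a • y := by
  have := hsmul a (y - x) ha (sub_nonneg.2 h)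
  rwa [smul_sub, sub_nonneg] at this

lemma aux_smul_sup (hsmul : ∀ (a : ℝ) (x : X), 0 ≤ a → 0 ≤ x → 0 ≤ a • x)
    {a : ℝ} (ha : 0 < a) (x y : X) : a • (x ⊔ y) = (a • x) ⊔ (a • y) := by
  refine le_antisymm ?_ (sup_le (aux_smul_le hsmul ha.le le_sup_left)
    (aux_smul_le hsmul ha.le le_sup_right))
  have h : x ⊔ y ≤ a⁻¹ • ((a • x) ⊔ (a • y)) := by
    refine sup_le ?_ ?_
    · have := aux_smul_le hsmul (inv_nonneg.2 ha.le) (le_sup_left : a • x ≤ (a • x) ⊔ (a • y))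
      rwa [inv_smul_smul₀ ha.ne'] at this
    · have := aux_smul_le hsmul (inv_nonneg.2 ha.le) (le_sup_right : a • y ≤ (a • x) ⊔ (a • y))
      rwa [inv_smul_smul₀ ha.ne'] at this
  have := aux_smul_le hsmul ha.le h
  rwa [smul_inv_smul₀ ha.ne'] at this

lemma aux_abs_smul (hsmul : ∀ (a : ℝ) (x : X), 0 ≤ a → 0 ≤ x → 0 ≤ a • x)
    (a : ℝ) (x : X) : |a • x| = |a| • |x| := by
  have habs : ∀ z : X, |z| = z ⊔ -z := fun z => rfl
  have hpos : ∀ (b : ℝ), 0 < b → ∀ z : X, |b • z| = b • |z| := by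
    intro b hb z
    rw [habs, habs, ← smul_neg, aux_smul_sup hsmul hb]
  rcases lt_trichotomy a 0 with h | h | h
  · have : a • x = -((-a) • x) := by rw [neg_smul, neg_neg]
    rw [this, abs_neg, hpos (-a) (by linarith), abs_of_neg h]
  · simp [h, habs]
  · rw [hpos a h, abs_of_pos h]

lemma aux_riesz {w a b : X} (hw : 0 ≤ w) (ha : 0 ≤ a) (hwab : w ≤ a + b) (hb : 0 ≤ b) :
    ∃ w₁ w₂ : X, 0 ≤ w₁ ∧ w₁ ≤ a ∧ 0 ≤ w₂ ∧ w₂ ≤ b ∧ w = w₁ + w₂ := by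
  refine ⟨w ⊓ a, w - w ⊓ a, le_inf hw ha, inf_le_right, ?_, ?_, by abel⟩
  · rw [sub_nonneg]; exact inf_le_left
  · have key : w - w ⊓ a = 0 ⊔ (w - a) := by
      rw [← neg_neg (w ⊓ a), sub_neg_eq_add, neg_inf, add_sup, add_neg_cancel, sub_eq_add_neg]
    rw [key]
    exact sup_le hb (sub_le_iff_le_add'.2 hwab)

end Aux

section Ando

variable {X : Type*} [NormedAddCommGroup X] [NormedSpace ℝ X] [CompleteSpace X]
    [Lattice X] [CovariantClass X X (· + ·) (· ≤ ·)]

theorem ando (hclosed : IsClosed {x : X | 0 ≤ x})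
    (hsmul : ∀ (a : ℝ) (x : X), 0 ≤ a → 0 ≤ x → 0 ≤ a • x) :
    ∃ C > (0:ℝ), ∀ x : X, ∃ y z : X, 0 ≤ y ∧ 0 ≤ z ∧ x = y - z ∧
      ‖y‖ ≤ C * ‖x‖ ∧ ‖z‖ ≤ C * ‖x‖ := by
  set S : ℝ → Set X :=
    fun b => {x | ∃ y z : X, 0 ≤ y ∧ 0 ≤ z ∧ ‖y‖ ≤ b ∧ ‖z‖ ≤ b ∧ x = y - z} with hS
  have hcover : (⋃ m : ℕ, closure (S m)) = Set.univ := by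
    ext x
    simp only [Set.mem_univ, iff_true, Set.mem_iUnion]
    obtain ⟨m, hm⟩ := exists_nat_ge (max ‖x⁺‖ ‖x⁻‖)
    exact ⟨m, subset_closure ⟨x⁺, x⁻, posPart_nonneg x, negPart_nonneg x,
      (le_max_left _ _).trans hm, (le_max_right _ _).trans hm, (posPart_sub_negPart x).symm⟩⟩
  obtain ⟨m, x₀, hx₀⟩ := nonempty_interior_of_iUnion_of_closed
    (fun m : ℕ => isClosed_closure (s := S m)) hcover
  set n : ℝ := (m : ℝ) with hn
  have hn0 : (0:ℝ) ≤ n := Nat.cast_nonneg m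
  -- convexity
  have hconv : Convex ℝ (S n) := by
    rintro p ⟨y₁, z₁, hy₁, hz₁, hy₁n, hz₁n, rfl⟩ q ⟨y₂, z₂, hy₂, hz₂, hy₂n, hz₂n, rfl⟩
      s t hs ht hst
    refine ⟨s • y₁ + t • y₂, s • z₁ + t • z₂,
      add_nonneg (hsmul _ _ hs hy₁) (hsmul _ _ ht hy₂),
      add_nonneg (hsmul _ _ hs hz₁) (hsmul _ _ ht hz₂), ?_, ?_, by
        simp only [smul_sub]; abel⟩
    · calc ‖s • y₁ + t • y₂‖ ≤ ‖s • y₁‖ + ‖t • y₂‖ := norm_add_le _ _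
        _ = s * ‖y₁‖ + t * ‖y₂‖ := by
            rw [norm_smul, norm_smul, Real.norm_eq_abs, Real.norm_eq_abs,
              abs_of_nonneg hs, abs_of_nonneg ht]
        _ ≤ s * n + t * n := by
            exact add_le_add (mul_le_mul_of_nonneg_left hy₁n hs)
              (mul_le_mul_of_nonneg_left hy₂n ht)
        _ = n := by rw [← add_mul, hst, one_mul]
    · calc ‖s • z₁ + t • z₂‖ ≤ ‖s • z₁‖ + ‖t • z₂‖ := norm_add_le _ _
        _ = s * ‖z₁‖ + t * ‖z₂‖ := by
            rw [norm_smul, norm_smul, Real.norm_eq_abs, Real.norm_eq_abs,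
              abs_of_nonneg hs, abs_of_nonneg ht]
        _ ≤ s * n + t * n := by
            exact add_le_add (mul_le_mul_of_nonneg_left hz₁n hs)
              (mul_le_mul_of_nonneg_left hz₂n ht)
        _ = n := by rw [← add_mul, hst, one_mul]
  -- symmetry
  have hsymm : -x₀ ∈ interior (closure (S n)) := by
    have hSneg : ∀ p ∈ S n, -p ∈ S n := by
      rintro p ⟨y, z, hy, hz, hyn, hzn, rfl⟩
      exact ⟨z, y, hz, hy, hzn, hyn, (neg_sub y z).symm ▸ rfl⟩
    have hclneg : ∀ p ∈ closure (S n), -p ∈ closure (S n) := by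
      intro p hp
      have h1 : -p ∈ (fun q : X => -q) '' closure (S n) := ⟨p, hp, rfl⟩
      have h2 := image_closure_subset_closure_image (continuous_neg (G := X)) h1
      refine closure_mono ?_ h2
      rintro q ⟨p', hp', rfl⟩
      exact hSneg p' hp'
    have hopen : IsOpen ((fun q : X => -q) ⁻¹' interior (closure (S n))) :=
      isOpen_interior.preimage continuous_neg
    have hsub : ((fun q : X => -q) ⁻¹' interior (closure (S n))) ⊆ closure (S n) := by
      intro p hp
      have h3 : -p ∈ closure (S n) := interior_subset hp
      simpa using hclneg _ h3
    have hmem : -x₀ ∈ (fun q : X => -q) ⁻¹' interior (closure (S n)) := by simpa using hx₀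
    exact interior_maximal hsub hopen hmem
  have h0 : (0:X) ∈ interior (closure (S n)) := by
    have hc := (hconv.closure).interior
    have := hc hx₀ hsymm (by norm_num : (0:ℝ) ≤ (1/2:ℝ)) (by norm_num : (0:ℝ) ≤ (1/2:ℝ))
      (by norm_num)
    simpa using this
  obtain ⟨r, hr, hball⟩ := Metric.isOpen_iff.1 isOpen_interior 0 h0
  have hball' : Metric.ball (0:X) r ⊆ closure (S n) := hball.trans interior_subset
  set K : ℝ := 2 * (n + 1) / r with hK
  have hKpos : 0 < K := by positivity
  -- key approximation
  have key : ∀ (u : X) (ε : ℝ), ∃ y z : X, 0 ≤ y ∧ 0 ≤ z ∧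
      ‖y‖ ≤ K * ‖u‖ ∧ ‖z‖ ≤ K * ‖u‖ ∧ (0 < ε → ‖u - (y - z)‖ < ε) := by
    intro u ε
    rcases eq_or_ne u 0 with rfl | hu
    · exact ⟨0, 0, le_rfl, le_rfl, by simp, by simp, fun hε => by simpa using hε⟩
    rcases le_or_gt ε 0 with hε | hε
    · exact ⟨0, 0, le_rfl, le_rfl, by simp only [norm_zero]; positivity,
        by simp only [norm_zero]; positivity, fun h => absurd h (not_lt.2 hε)⟩
    have hun : 0 < ‖u‖ := norm_pos_iff.2 hu
    set t : ℝ := r / (2 * ‖u‖) with ht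
    have htpos : 0 < t := by positivity
    have htu : ‖t • u‖ < r := by
      rw [norm_smul, Real.norm_eq_abs, abs_of_pos htpos, ht]
      rw [div_mul_eq_mul_div, mul_comm]
      rw [div_lt_iff₀ (by positivity)]
      nlinarith
    have hmem : t • u ∈ closure (S n) := hball' (by simpa [Metric.mem_ball, dist_zero_right] using htu)
    obtain ⟨s, hsS, hds⟩ := Metric.mem_closure_iff.1 hmem (t * ε) (by positivity)
    obtain ⟨y', z', hy', hz', hy'n, hz'n, rfl⟩ := hsS
    refine ⟨t⁻¹ • y', t⁻¹ • z', hsmul _ _ (by positivity) hy', hsmul _ _ (by positivity) hz',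
      ?_, ?_, fun _ => ?_⟩
    · rw [norm_smul, Real.norm_eq_abs, abs_of_pos (by positivity : (0:ℝ) < t⁻¹)]
      calc t⁻¹ * ‖y'‖ ≤ t⁻¹ * n := by
            exact mul_le_mul_of_nonneg_left hy'n (by positivity)
        _ ≤ K * ‖u‖ := by
            rw [ht, hK, inv_div, div_mul_eq_mul_div, div_mul_eq_mul_div,
              div_le_div_iff₀ hr hr]
            nlinarith [mul_nonneg (norm_nonneg u) hr.le, hun]
    · rw [norm_smul, Real.norm_eq_abs, abs_of_pos (by positivity : (0:ℝ) < t⁻¹)]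
      calc t⁻¹ * ‖z'‖ ≤ t⁻¹ * n := by
            exact mul_le_mul_of_nonneg_left hz'n (by positivity)
        _ ≤ K * ‖u‖ := by
            rw [ht, hK, inv_div, div_mul_eq_mul_div, div_mul_eq_mul_div,
              div_le_div_iff₀ hr hr]
            nlinarith [mul_nonneg (norm_nonneg u) hr.le, hun]
    · have : u - (t⁻¹ • y' - t⁻¹ • z') = t⁻¹ • (t • u - (y' - z')) := by
        rw [smul_sub, inv_smul_smul₀ htpos.ne', smul_sub]
      rw [this, norm_smul, Real.norm_eq_abs, abs_of_pos (by positivity : (0:ℝ) < t⁻¹)]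
      have hd : ‖t • u - (y' - z')‖ < t * ε := by
        rwa [dist_eq_norm] at hds
      calc t⁻¹ * ‖t • u - (y' - z')‖ < t⁻¹ * (t * ε) := by
            exact mul_lt_mul_of_pos_left hd (by positivity)
        _ = ε := by field_simp
  -- choose
  choose Y Z hY hZ hYn hZn happ using key
  refine ⟨2 * K + 1, by positivity, fun x => ?_⟩
  rcases eq_or_ne x 0 with rfl | hx
  · exact ⟨0, 0, le_rfl, le_rfl, by simp, by simp, by simp⟩
  set δ : ℝ := ‖x‖ with hδ
  have hδpos : 0 < δ := norm_pos_iff.2 hx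
  set ε : ℕ → ℝ := fun k => δ / 2 ^ (k + 1) with hε
  have hεpos : ∀ k, 0 < ε k := fun k => by positivity
  set u : ℕ → X := fun k => Nat.rec x (fun k uk => uk - (Y uk (ε k) - Z uk (ε k))) k with hu
  have huS : ∀ k, u (k + 1) = u k - (Y (u k) (ε k) - Z (u k) (ε k)) := fun k => rfl
  have hub : ∀ k, ‖u k‖ ≤ δ / 2 ^ k := by
    intro k
    induction k with
    | zero => simp [hu, hδ]
    | succ k _ => exact (huS k ▸ (happ (u k) (ε k) (hεpos k)).le)
  set y : ℕ → X := fun k => Y (u k) (ε k) with hy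
  set z : ℕ → X := fun k => Z (u k) (ε k) with hz
  have hyb : ∀ k, ‖y k‖ ≤ K * δ * (1 / 2) ^ k := by
    intro k
    refine (hYn (u k) (ε k)).trans ?_
    have := mul_le_mul_of_nonneg_left (hub k) hKpos.le
    calc K * ‖u k‖ ≤ K * (δ / 2 ^ k) := this
      _ = K * δ * (1 / 2) ^ k := by rw [div_pow, one_pow]; ring
  have hzb : ∀ k, ‖z k‖ ≤ K * δ * (1 / 2) ^ k := by
    intro k
    refine (hZn (u k) (ε k)).trans ?_
    have := mul_le_mul_of_nonneg_left (hub k) hKpos.le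
    calc K * ‖u k‖ ≤ K * (δ / 2 ^ k) := this
      _ = K * δ * (1 / 2) ^ k := by rw [div_pow, one_pow]; ring
  have hgeom : Summable (fun k : ℕ => K * δ * (1 / 2) ^ k) :=
    (summable_geometric_two).mul_left (K * δ)
  have hys : Summable y := Summable.of_norm_bounded hgeom hyb
  have hzs : Summable z := Summable.of_norm_bounded hgeom hzb
  have hsy : HasSum y (∑' k, y k) := hys.hasSum
  have hsz : HasSum z (∑' k, z k) := hzs.hasSum
  -- nonnegativity of sums
  have hy0 : (0:X) ≤ ∑' k, y k := by
    refine hclosed.mem_of_tendsto hsy.tendsto_sum_nat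
      (Filter.Eventually.of_forall fun mm => ?_)
    exact aux_sum_nonneg (fun i => hY _ _) mm
  have hz0 : (0:X) ≤ ∑' k, z k := by
    refine hclosed.mem_of_tendsto hsz.tendsto_sum_nat
      (Filter.Eventually.of_forall fun mm => ?_)
    exact aux_sum_nonneg (fun i => hZ _ _) mm
  -- norm bounds
  have hysn : Summable fun k => ‖y k‖ :=
    Summable.of_nonneg_of_le (fun k => norm_nonneg _) hyb hgeom
  have hzsn : Summable fun k => ‖z k‖ :=
    Summable.of_nonneg_of_le (fun k => norm_nonneg _) hzb hgeom
  have hnormy : ‖∑' k, y k‖ ≤ 2 * K * δ := by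
    calc ‖∑' k, y k‖ ≤ ∑' k, ‖y k‖ := norm_tsum_le_tsum_norm hysn
      _ ≤ ∑' k, K * δ * (1 / 2) ^ k := Summable.tsum_le_tsum hyb hysn hgeom
      _ = K * δ * 2 := by rw [tsum_mul_left, tsum_geometric_two]
      _ = 2 * K * δ := by ring
  have hnormz : ‖∑' k, z k‖ ≤ 2 * K * δ := by
    calc ‖∑' k, z k‖ ≤ ∑' k, ‖z k‖ := norm_tsum_le_tsum_norm hzsn
      _ ≤ ∑' k, K * δ * (1 / 2) ^ k := Summable.tsum_le_tsum hzb hzsn hgeom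
      _ = K * δ * 2 := by rw [tsum_mul_left, tsum_geometric_two]
      _ = 2 * K * δ := by ring
  -- partial sums identity
  have hpartial : ∀ mm : ℕ, ∑ i ∈ Finset.range mm, (y i - z i) = x - u mm := by
    intro mm
    induction mm with
    | zero => simp [hu]
    | succ k ih =>
        rw [Finset.sum_range_succ, ih, huS k]
        abel
  have hu0 : Filter.Tendsto u Filter.atTop (nhds 0) := by
    refine squeeze_zero_norm hub ?_
    have h2 : Filter.Tendsto (fun k : ℕ => δ * (1 / 2 : ℝ) ^ k) Filter.atTop (nhds (δ * 0)) :=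
      (tendsto_pow_atTop_nhds_zero_of_lt_one (by norm_num) (by norm_num)).const_mul δ
    simpa [div_pow, div_eq_mul_inv, mul_comm] using h2
  have htendx : Filter.Tendsto (fun mm => ∑ i ∈ Finset.range mm, (y i - z i))
      Filter.atTop (nhds x) := by
    have := (Filter.Tendsto.const_sub x hu0)
    simp only [sub_zero] at this
    exact (funext hpartial : (fun mm => ∑ i ∈ Finset.range mm, (y i - z i)) = fun mm => x - u mm) ▸ this
  have htendsum : Filter.Tendsto (fun mm => ∑ i ∈ Finset.range mm, (y i - z i))
      Filter.atTop (nhds ((∑' k, y k) - ∑' k, z k)) :=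
    (hsy.sub hsz).tendsto_sum_nat
  have hxeq : x = (∑' k, y k) - ∑' k, z k := tendsto_nhds_unique htendx htendsum
  refine ⟨∑' k, y k, ∑' k, z k, hy0, hz0, hxeq, ?_, ?_⟩
  · calc ‖∑' k, y k‖ ≤ 2 * K * δ := hnormy
      _ ≤ (2 * K + 1) * ‖x‖ := by rw [hδ] at *; nlinarith [norm_nonneg x]
  · calc ‖∑' k, z k‖ ≤ 2 * K * δ := hnormz
      _ ≤ (2 * K + 1) * ‖x‖ := by rw [hδ] at *; nlinarith [norm_nonneg x]

end Ando


/-- Let `X` be an ordered Banach space that is also a vector lattice with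
respect to the same order, with a normal (and closed) positive cone. Then
`|||x||| := sup {‖w‖ : 0 ≤ w ≤ |x|}` defines a norm on `X` that is equivalent to the
original norm and is a lattice norm: `|x| ≤ |y|` implies `|||x||| ≤ |||y|||`. -/
theorem stmt5 {X : Type*} [NormedAddCommGroup X] [NormedSpace ℝ X] [CompleteSpace X]
    [Lattice X] [CovariantClass X X (· + ·) (· ≤ ·)]
    (hclosed : IsClosed {x : X | 0 ≤ x})
    (hsmul : ∀ (a : ℝ) (x : X), 0 ≤ a → 0 ≤ x → 0 ≤ a • x)
    (M : ℝ) (hM : 1 ≤ M)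
    (hnormal : ∀ x y : X, 0 ≤ x → x ≤ y → ‖x‖ ≤ M * ‖y‖) :
    ∃ N : X → ℝ,
      (∀ x : X, N x = sSup {r : ℝ | ∃ w : X, 0 ≤ w ∧ w ≤ |x| ∧ r = ‖w‖}) ∧
      N (0 : X) = 0 ∧
      (∀ x : X, N x = 0 → x = 0) ∧
      (∀ x y : X, N (x + y) ≤ N x + N y) ∧
      (∀ (a : ℝ) (x : X), N (a • x) = |a| * N x) ∧
      (∃ c₁ > (0 : ℝ), ∃ c₂ > (0 : ℝ), ∀ x : X, c₁ * ‖x‖ ≤ N x ∧ N x ≤ c₂ * ‖x‖) ∧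
      (∀ x y : X, |x| ≤ |y| → N x ≤ N y) := by
  have hM0 : (0:ℝ) < M := lt_of_lt_of_le one_pos hM
  set S : X → Set ℝ := fun x => {r : ℝ | ∃ w : X, 0 ≤ w ∧ w ≤ |x| ∧ r = ‖w‖} with hSdef
  set N : X → ℝ := fun x => sSup (S x) with hNdef
  have hmem0 : ∀ x : X, (0:ℝ) ∈ S x := fun x => ⟨0, le_rfl, abs_nonneg x, norm_zero.symm⟩
  have hne : ∀ x : X, (S x).Nonempty := fun x => ⟨0, hmem0 x⟩
  have hub : ∀ x : X, ∀ r ∈ S x, r ≤ M * ‖|x|‖ := by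
    rintro x r ⟨w, hw0, hwx, rfl⟩
    exact hnormal w |x| hw0 hwx
  have hbdd : ∀ x : X, BddAbove (S x) := fun x => ⟨M * ‖|x|‖, hub x⟩
  have hmemabs : ∀ x : X, ‖|x|‖ ∈ S x := fun x => ⟨|x|, abs_nonneg x, le_rfl, rfl⟩
  have habsle : ∀ x : X, ‖|x|‖ ≤ N x := fun x => le_csSup (hbdd x) (hmemabs x)
  have hN0 : N 0 = 0 := by
    refine le_antisymm (csSup_le (hne 0) ?_) (le_csSup (hbdd 0) (hmem0 0))
    rintro r ⟨w, hw0, hwx, rfl⟩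
    have : w = 0 := le_antisymm (by simpa using hwx) hw0
    simp [this]
  -- monotonicity
  have hmono : ∀ x y : X, |x| ≤ |y| → N x ≤ N y := by
    intro x y hxy
    refine csSup_le_csSup (hbdd y) (hne x) ?_
    rintro r ⟨w, hw0, hwx, rfl⟩
    exact ⟨w, hw0, hwx.trans hxy, rfl⟩
  -- definiteness
  have hdef : ∀ x : X, N x = 0 → x = 0 := by
    intro x hx
    have h1 : ‖|x|‖ ≤ 0 := hx ▸ habsle x
    have h2 : |x| = 0 := norm_le_zero_iff.1 h1
    exact aux_abs_eq_zero h2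
  -- triangle inequality
  have htri : ∀ x y : X, N (x + y) ≤ N x + N y := by
    intro x y
    refine csSup_le (hne _) ?_
    rintro r ⟨w, hw0, hwx, rfl⟩
    have hwxy : w ≤ |x| + |y| := hwx.trans (abs_add_le x y)
    obtain ⟨w₁, w₂, hw₁0, hw₁, hw₂0, hw₂, rfl⟩ :=
      aux_riesz hw0 (abs_nonneg x) hwxy (abs_nonneg y)
    calc ‖w₁ + w₂‖ ≤ ‖w₁‖ + ‖w₂‖ := norm_add_le _ _
      _ ≤ N x + N y := add_le_add (le_csSup (hbdd x) ⟨w₁, hw₁0, hw₁, rfl⟩)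
          (le_csSup (hbdd y) ⟨w₂, hw₂0, hw₂, rfl⟩)
  -- homogeneity
  have hhom : ∀ (a : ℝ) (x : X), N (a • x) = |a| * N x := by
    intro a x
    rcases eq_or_ne a 0 with rfl | ha
    · simp [hN0]
    have hap : (0:ℝ) < |a| := abs_pos.2 ha
    have habs : |a • x| = |a| • |x| := aux_abs_smul hsmul a x
    have h1 : N (a • x) ≤ |a| * N x := by
      refine csSup_le (hne _) ?_
      rintro r ⟨w, hw0, hwx, rfl⟩
      rw [habs] at hwx
      have hw' : |a|⁻¹ • w ≤ |x| := by
        have := aux_smul_le hsmul (inv_nonneg.2 hap.le) hwx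
        rwa [inv_smul_smul₀ hap.ne'] at this
      have hw'0 : 0 ≤ |a|⁻¹ • w := hsmul _ _ (inv_nonneg.2 hap.le) hw0
      have hnw : ‖w‖ = |a| * ‖|a|⁻¹ • w‖ := by
        rw [norm_smul, Real.norm_eq_abs, abs_of_pos (inv_pos.2 hap)]
        field_simp
      rw [hnw]
      exact mul_le_mul_of_nonneg_left (le_csSup (hbdd x) ⟨_, hw'0, hw', rfl⟩) hap.le
    have h2 : |a| * N x ≤ N (a • x) := by
      rw [mul_comm, ← le_div_iff₀ hap]
      refine csSup_le (hne x) ?_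
      rintro r ⟨w, hw0, hwx, rfl⟩
      have hw' : |a| • w ≤ |a • x| := by
        rw [habs]
        exact aux_smul_le hsmul hap.le hwx
      have hw'0 : 0 ≤ |a| • w := hsmul _ _ hap.le hw0
      have hnw : ‖w‖ = ‖|a| • w‖ / |a| := by
        rw [norm_smul, Real.norm_eq_abs, abs_of_pos hap]
        field_simp
      rw [hnw]
      exact (div_le_div_iff_of_pos_right hap).2 (le_csSup (hbdd _) ⟨_, hw'0, hw', rfl⟩)
    exact le_antisymm h1 h2
  -- norm equivalence
  obtain ⟨C, hC, hando⟩ := ando hclosed hsmul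
  have hposle : ∀ x : X, x⁺ ≤ |x| := fun x =>
    sup_le (le_abs_self x) (abs_nonneg x)
  have hnegle : ∀ x : X, x⁻ ≤ |x| := fun x =>
    sup_le (neg_le_abs x) (abs_nonneg x)
  have hlow : ∀ x : X, (1 / (2 * M)) * ‖x‖ ≤ N x := by
    intro x
    rw [div_mul_eq_mul_div, one_mul, div_le_iff₀ (by positivity)]
    have h1 : ‖x‖ ≤ ‖x⁺‖ + ‖x⁻‖ := by
      calc ‖x‖ = ‖x⁺ - x⁻‖ := by rw [posPart_sub_negPart]
        _ ≤ ‖x⁺‖ + ‖x⁻‖ := norm_sub_le _ _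
    have h2 : ‖x⁺‖ ≤ M * ‖|x|‖ := hnormal _ _ (posPart_nonneg x) (hposle x)
    have h3 : ‖x⁻‖ ≤ M * ‖|x|‖ := hnormal _ _ (negPart_nonneg x) (hnegle x)
    have h4 : ‖|x|‖ ≤ N x := habsle x
    nlinarith [norm_nonneg (|x|)]
  have hup : ∀ x : X, N x ≤ (2 * M * M * C) * ‖x‖ := by
    intro x
    obtain ⟨y, z, hy0, hz0, hxyz, hyn, hzn⟩ := hando x
    have hxy : x ≤ y := by
      rw [hxyz]
      exact sub_le_self y hz0
    have hxz : -x ≤ z := by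
      rw [hxyz]
      have : -(y - z) = z - y := by abel
      rw [this]
      exact sub_le_self z hy0
    have hps : x⁺ ≤ y := sup_le hxy hy0
    have hns : x⁻ ≤ z := sup_le hxz hz0
    have h2 : ‖x⁺‖ ≤ M * ‖y‖ := hnormal _ _ (posPart_nonneg x) hps
    have h3 : ‖x⁻‖ ≤ M * ‖z‖ := hnormal _ _ (negPart_nonneg x) hns
    have h4 : ‖|x|‖ ≤ ‖x⁺‖ + ‖x⁻‖ := by
      calc ‖|x|‖ = ‖x⁺ + x⁻‖ := by rw [posPart_add_negPart]
        _ ≤ ‖x⁺‖ + ‖x⁻‖ := norm_add_le _ _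
    have h5 : N x ≤ M * ‖|x|‖ := csSup_le (hne x) (hub x)
    calc N x ≤ M * ‖|x|‖ := h5
      _ ≤ M * (‖x⁺‖ + ‖x⁻‖) := mul_le_mul_of_nonneg_left h4 hM0.le
      _ ≤ M * (M * ‖y‖ + M * ‖z‖) := mul_le_mul_of_nonneg_left (add_le_add h2 h3) hM0.le
      _ ≤ M * (M * (C * ‖x‖) + M * (C * ‖x‖)) := by
          refine mul_le_mul_of_nonneg_left (add_le_add ?_ ?_) hM0.le <;>
            exact mul_le_mul_of_nonneg_left (by assumption) hM0.le
      _ = (2 * M * M * C) * ‖x‖ := by ring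
  refine ⟨N, fun x => rfl, hN0, hdef, htri, hhom,
    ⟨1 / (2 * M), by positivity, 2 * M * M * C, by positivity, fun x => ⟨hlow x, hup x⟩⟩, hmono⟩
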